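/- Let K = max_u ξ_u(0) − min_u ξ_u(0) be the initial discrepancy. Then: (a) in the Node Model on a connected graph G with maximum degree d_max, the degree-weighted average M(t) = Σ_u (d_u/(2m))ξ_u(t) satisfies Var(M(t)) ≤ t·( d_max·K / (2m) )² for all t ≥ 0; and (b) in the Edge Model on a connected graph G, the average Avg(t) = (1/n)Σ_u ξ_u(t) satisfies Var(Avg(t)) ≤ (t/n²)·K² for all t ≥ 0. -/

import Mathlib

open MeasureTheory ProbabilityTheory Finset

instance finsetFinMeasurableSpace (n : ℕ) : MeasurableSpace (Finset (Fin n)) := ⊤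

/-- A step of the Node Model: selected node together with the selected set of neighbours. -/
abbrev NodeStep (n : ℕ) := Fin n × Finset (Fin n)

/-- Distribution of a single step of the Node Model: a uniformly random node `u`,
together with a uniformly random set of `k` of its neighbours. -/
noncomputable def nodeStepPMF {n : ℕ} (G : SimpleGraph (Fin n)) [DecidableRel G.Adj]
    (hn : Nonempty (Fin n)) (k : ℕ) (hk : ∀ u, k ≤ G.degree u) : PMF (NodeStep n) :=
  letI := hn
  (PMF.uniformOfFintype (Fin n)).bind fun u =>
    (PMF.uniformOfFinset ((G.neighborFinset u).powersetCard k)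
      (Finset.powersetCard_nonempty.2 (hk u))).map fun S => (u, S)

/-- One update of the Node Model: the selected node `s.1` replaces its value by an
`α`-fraction of its own value plus a `(1-α)/k`-fraction of the values of the selected
neighbours `s.2`. -/
noncomputable def nodeUpdate {n : ℕ} (α : ℝ) (k : ℕ) (s : NodeStep n) (ξ : Fin n → ℝ) :
    Fin n → ℝ :=
  fun w => if w = s.1 then α * ξ w + ((1 - α) / k) * ∑ v ∈ s.2, ξ v else ξ w

/-- The trajectory of node values of the Node Model, given the sequence of step choices. -/
noncomputable def nodeTraj {n : ℕ} (α : ℝ) (k : ℕ) (ξ0 : Fin n → ℝ)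
    (ω : ℕ → NodeStep n) : ℕ → Fin n → ℝ
  | 0 => ξ0
  | t + 1 => nodeUpdate α k (ω t) (nodeTraj α k ξ0 ω t)

/-- Stationary distribution of the lazy random walk: `π u = d_u / (2m)`. -/
noncomputable def piRW {n : ℕ} (G : SimpleGraph (Fin n)) [DecidableRel G.Adj] (u : Fin n) : ℝ :=
  (G.degree u : ℝ) / (2 * (G.edgeFinset.card : ℝ))

/-- The potential `φ(ξ) = (1/2) Σ_{u,v} π_u π_v (ξ_u - ξ_v)²`. -/
noncomputable def phi {n : ℕ} (G : SimpleGraph (Fin n)) [DecidableRel G.Adj]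
    (ξ : Fin n → ℝ) : ℝ :=
  (1 / 2) * ∑ u, ∑ v, piRW G u * piRW G v * (ξ u - ξ v) ^ 2

/-- Transition matrix of the lazy random walk on `G`. -/
noncomputable def lazyP {n : ℕ} (G : SimpleGraph (Fin n)) [DecidableRel G.Adj] :
    Matrix (Fin n) (Fin n) ℝ :=
  Matrix.of fun i j =>
    if i = j then 1 / 2 else if G.Adj i j then 1 / (2 * (G.degree i : ℝ)) else 0

/-- `lam` is the second-largest eigenvalue of the (reversible) lazy random-walk matrix `P`:
it is the largest eigenvalue attained on the space of vectors `π`-orthogonal to `1`. -/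
def IsSecondEigenvalueP {n : ℕ} (G : SimpleGraph (Fin n)) [DecidableRel G.Adj]
    (lam : ℝ) : Prop :=
  (∃ f : Fin n → ℝ, f ≠ 0 ∧ (lazyP G).mulVec f = lam • f ∧ ∑ x, piRW G x * f x = 0) ∧
  ∀ lam' : ℝ,
    (∃ f : Fin n → ℝ, f ≠ 0 ∧ (lazyP G).mulVec f = lam' • f ∧ ∑ x, piRW G x * f x = 0) →
      lam' ≤ lam


/-- A step of the Edge Model: a directed edge, i.e. an ordered pair of adjacent nodes. -/
abbrev EdgeStep (n : ℕ) := Fin n × Fin n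

/-- A connected graph on at least two vertices has a directed edge. -/
lemma exists_adj_pair {n : ℕ} (G : SimpleGraph (Fin n)) [DecidableRel G.Adj]
    (hconn : G.Connected) (hn : 1 < n) :
    (Finset.univ.filter fun p : EdgeStep n => G.Adj p.1 p.2).Nonempty := by
  obtain ⟨w⟩ := hconn.preconnected ⟨0, by omega⟩ ⟨1, hn⟩
  cases w with
  | @cons _ v _ h _ => exact ⟨(_, v), by simpa using h⟩

/-- Distribution of a single step of the Edge Model: a uniformly random directed edge. -/
noncomputable def edgeStepPMF {n : ℕ} (G : SimpleGraph (Fin n)) [DecidableRel G.Adj]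
    (hconn : G.Connected) (hn : 1 < n) : PMF (EdgeStep n) :=
  PMF.uniformOfFinset _ (exists_adj_pair G hconn hn)

/-- One update of the Edge Model: for the chosen directed edge `e = (u,v)`, node `u`
replaces its value by `α ξ_u + (1-α) ξ_v`. -/
noncomputable def edgeUpdate {n : ℕ} (α : ℝ) (e : EdgeStep n) (ξ : Fin n → ℝ) : Fin n → ℝ :=
  fun w => if w = e.1 then α * ξ w + (1 - α) * ξ e.2 else ξ w

/-- The trajectory of node values of the Edge Model, given the sequence of step choices. -/
noncomputable def edgeTraj {n : ℕ} (α : ℝ) (ξ0 : Fin n → ℝ) (ω : ℕ → EdgeStep n) :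
    ℕ → Fin n → ℝ
  | 0 => ξ0
  | t + 1 => edgeUpdate α (ω t) (edgeTraj α ξ0 ω t)

/-- The degree-weighted average `M(ξ) = Σ_u (d_u/(2m)) ξ_u`. -/
noncomputable def Mdeg {n : ℕ} (G : SimpleGraph (Fin n)) [DecidableRel G.Adj]
    (ξ : Fin n → ℝ) : ℝ :=
  ∑ u, piRW G u * ξ u

/-- The plain average `Avg(ξ) = (1/n) Σ_u ξ_u`. -/
noncomputable def Avg {n : ℕ} (ξ : Fin n → ℝ) : ℝ :=
  (1 / (n : ℝ)) * ∑ u, ξ u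


namespace VarAux

variable {S : Type} [Fintype S] [Nonempty S] [MeasurableSpace S] [MeasurableSingletonClass S]

/-- Trajectory determined by a finite prefix of steps. -/
def T {State : Type} (x0 : State) (upd : S → State → State) : ∀ t, (Fin t → S) → State
  | 0, _ => x0
  | t+1, a => upd (a (Fin.last t)) (T x0 upd t (Fin.init a))

lemma T_snoc {State : Type} (x0 : State) (upd : S → State → State) (t : ℕ)
    (a : Fin t → S) (s : S) : T x0 upd (t+1) (Fin.snoc a s) = upd s (T x0 upd t a) := by
  simp [T, Fin.init_snoc, Fin.snoc_last]

def absTraj {State : Type} (x0 : State) (upd : S → State → State) (ω : ℕ → S) : ℕ → State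
  | 0 => x0
  | t+1 => upd (ω t) (absTraj x0 upd ω t)

lemma absTraj_eq_T {State : Type} (x0 : State) (upd : S → State → State) (ω : ℕ → S) (t : ℕ) :
    absTraj x0 upd ω t = T x0 upd t (fun i : Fin t => ω i) := by
  induction t with
  | zero => rfl
  | succ t ih =>
    show upd (ω t) _ = _
    rw [ih]
    have h : (fun i : Fin (t+1) => ω i) = Fin.snoc (fun i : Fin t => ω i) (ω t) := by
      funext i
      refine Fin.lastCases ?_ (fun j => ?_) i
      · simp
      · simp [Fin.snoc_castSucc]
    rw [h, T_snoc]

variable {Ω : Type} {mΩ : MeasurableSpace Ω} (Pr : Measure Ω) [IsProbabilityMeasure Pr]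

lemma variance_le_integral_sq_sub (X : Ω → ℝ) (hX : MemLp X 2 Pr) (c : ℝ) :
    variance X Pr ≤ ∫ ω, (X ω - c)^2 ∂Pr := by
  have hint : Integrable X Pr := hX.integrable one_le_two
  have hsq : Integrable (fun ω => X ω ^ 2) Pr := hX.integrable_sq
  have h1 : ∫ ω, (X ω - c)^2 ∂Pr
      = ∫ ω, X ω ^ 2 ∂Pr + ((-2*c) * ∫ ω, X ω ∂Pr + c^2) := by
    rw [show (fun ω => (X ω - c)^2) = fun ω => X ω^2 + ((-2*c) * X ω + c^2) from
      funext fun ω => by ring]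
    have hg : Integrable (fun ω => (-2*c) * X ω + c^2) Pr := by
      exact (hint.const_mul _).add (integrable_const _)
    have hcm : Integrable (fun ω => (-2*c) * X ω) Pr := hint.const_mul _
    have e2 : ∫ ω, ((-2*c) * X ω + c^2) ∂Pr = (-2*c) * ∫ ω, X ω ∂Pr + c^2 := by
      rw [integral_add hcm (integrable_const _), integral_const_mul,
        integral_const, probReal_univ, smul_eq_mul, one_mul]
    rw [integral_add hsq hg, e2]
  rw [variance_eq_sub hX, h1]
  have : (0:ℝ) ≤ (∫ ω, X ω ∂Pr - c)^2 := sq_nonneg _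
  simp only [Pi.pow_apply] at *
  nlinarith [this]

end VarAux

namespace Core

variable {S : Type} [Fintype S] [Nonempty S] [MeasurableSpace S] [MeasurableSingletonClass S]
variable {Ω : Type} {mΩ : MeasurableSpace Ω} {Pr : Measure Ω} [IsProbabilityMeasure Pr]
variable {steps : ℕ → Ω → S} {μ : Measure S} [IsProbabilityMeasure μ]

open VarAux

theorem abstract_variance_bound
    (hmeas : ∀ t, Measurable (steps t))
    (hiid : iIndepFun steps Pr)
    (hdist : ∀ t, Measure.map (steps t) Pr = μ)
    {State : Type} (x0 : State) (upd : S → State → State) (f : State → ℝ)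
    (Good : Set S) (hGood : μ Good = 1)
    (Inv : State → Prop) (hInv0 : Inv x0)
    (hInvStep : ∀ x s, Inv x → s ∈ Good → Inv (upd s x))
    (B : ℝ) (hB : 0 ≤ B)
    (hmart : ∀ x, Inv x → ∫ s, f (upd s x) ∂μ = f x)
    (hbound : ∀ x s, Inv x → s ∈ Good → |f (upd s x) - f x| ≤ B)
    (t : ℕ) :
    variance (fun ω => f (absTraj x0 upd (fun i => steps i ω) t)) Pr ≤ t * B^2 := by
  classical
  set c := f x0 with hc
  -- prefix maps and pushforward measures
  set Y : ∀ t : ℕ, Ω → (Fin t → S) := fun t ω i => steps i ω with hY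
  have hYmeas : ∀ t, Measurable (Y t) := fun t =>
    measurable_pi_lambda _ (fun i => hmeas i)
  set ν : (t : ℕ) → Measure (Fin t → S) := fun t => Pr.map (Y t) with hν
  have hνprob : ∀ t, IsProbabilityMeasure (ν t) := fun t =>
    Measure.isProbabilityMeasure_map (hYmeas t).aemeasurable
  -- independence of the prefix and the next step
  have hindep : ∀ t, IndepFun (Y t) (steps t) Pr := by
    intro t
    have hdisj : Disjoint (Finset.range t) ({t} : Finset ℕ) := by
      simp only [Finset.disjoint_left, Finset.mem_range, Finset.mem_singleton]
      omega
    have h0 := hiid.indepFun_finset (Finset.range t) ({t} : Finset ℕ) hdisj hmeas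
    have h1 := h0.comp
      (φ := fun (g : (i : ↥(Finset.range t)) → S) => fun i : Fin t =>
        g ⟨i.1, Finset.mem_range.2 i.2⟩)
      (ψ := fun (g : (i : ↥({t} : Finset ℕ)) → S) => g ⟨t, Finset.mem_singleton_self t⟩)
      (measurable_pi_lambda _ (fun i => measurable_pi_apply _))
      (show Measurable (fun (g : (i : ↥({t} : Finset ℕ)) → S) => g ⟨t, Finset.mem_singleton_self t⟩)
        from measurable_pi_apply _)
    exact h1
  -- the joint law of (prefix, next step) is a product, hence `ν (t+1)` disintegrates
  have key_int : ∀ t (g : (Fin (t+1) → S) → ℝ),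
      ∫ a, g a ∂(ν (t+1)) = ∫ a, (∫ s, g (Fin.snoc a s) ∂μ) ∂(ν t) := by
    intro t g
    haveI := hνprob t
    have hjoint : Pr.map (fun ω => (Y t ω, steps t ω)) = (ν t).prod μ := by
      rw [← hdist t]
      exact (indepFun_iff_map_prod_eq_prod_map_map (hYmeas t).aemeasurable
        (hmeas t).aemeasurable).1 (hindep t)
    have hsnoc : (fun ω => Fin.snoc (Y t ω) (steps t ω) : Ω → (Fin (t+1) → S))
        = Y (t+1) := by
      funext ω
      funext i
      refine Fin.lastCases ?_ (fun j => ?_) i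
      · simp [hY]
      · simp [hY, Fin.snoc_castSucc]
    have hνsucc : ν (t+1) = ((ν t).prod μ).map (fun p : (Fin t → S) × S => Fin.snoc p.1 p.2) := by
      rw [← hjoint, Measure.map_map (measurable_of_finite _) ((hYmeas t).prodMk (hmeas t))]
      show Pr.map (Y (t+1)) = _
      rw [← hsnoc]
      rfl
    rw [hνsucc, integral_map (measurable_of_finite _).aemeasurable
      (measurable_of_finite _).aestronglyMeasurable]
    exact MeasureTheory.integral_prod _ (Integrable.of_finite)
  -- almost every prefix consists of good steps
  have hgoodset : ∀ t, ∀ᵐ a ∂(ν t), ∀ i : Fin t, a i ∈ Good := by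
    intro t
    rw [hν]
    rw [ae_map_iff (hYmeas t).aemeasurable (MeasurableSet.of_discrete)]
    rw [MeasureTheory.ae_all_iff]
    intro i
    have : ∀ᵐ s ∂(Pr.map (steps i)), s ∈ Good := by
      rw [hdist i]
      have hcompl : μ Goodᶜ = 0 := by
        have := measure_compl (MeasurableSet.of_discrete (s := Good)) (measure_ne_top μ _)
        rw [hGood, measure_univ] at this
        simp [this]
      exact ae_iff.2 hcompl
    rw [ae_map_iff (hmeas i).aemeasurable (MeasurableSet.of_discrete)] at this
    exact this
  -- invariance along good prefixes
  have hInvT : ∀ t (a : Fin t → S), (∀ i, a i ∈ Good) → Inv (T x0 upd t a) := by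
    intro t
    induction t with
    | zero => intro a _; exact hInv0
    | succ t ih =>
      intro a ha
      exact hInvStep _ _ (ih (Fin.init a) (fun i => ha _)) (ha (Fin.last t))
  -- one-step conditional second-moment bound
  have hstep : ∀ x : State, Inv x →
      ∫ s, (f (upd s x) - c)^2 ∂μ ≤ (f x - c)^2 + B^2 := by
    intro x hx
    have hgood : ∀ᵐ s ∂μ, s ∈ Good := by
      have hcompl : μ Goodᶜ = 0 := by
        have := measure_compl (MeasurableSet.of_discrete (s := Good)) (measure_ne_top μ _)
        rw [hGood, measure_univ] at this
        simp [this]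
      exact ae_iff.2 hcompl
    have hmart0 : ∫ s, (f (upd s x) - f x) ∂μ = 0 := by
      rw [integral_sub (Integrable.of_finite) (integrable_const _), hmart x hx,
        integral_const, probReal_univ, smul_eq_mul, one_mul, sub_self]
    have expand : ∀ s, (f (upd s x) - c)^2
        = (f (upd s x) - f x)^2 + (2*(f x - c))*(f (upd s x) - f x) + ((f x - c)^2) := by
      intro s; ring
    calc ∫ s, (f (upd s x) - c)^2 ∂μ
        = ∫ s, ((f (upd s x) - f x)^2 + ((2*(f x - c))*(f (upd s x) - f x) + (f x - c)^2)) ∂μ := by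
          congr 1; funext s; rw [expand s]; ring
      _ = ∫ s, (f (upd s x) - f x)^2 ∂μ
          + ((2*(f x - c)) * ∫ s, (f (upd s x) - f x) ∂μ + (f x - c)^2) := by
          have h1 : Integrable (fun s => (2*(f x - c))*(f (upd s x) - f x) + (f x - c)^2) μ :=
            Integrable.of_finite
          rw [integral_add (Integrable.of_finite) h1]
          congr 1
          have h2 : Integrable (fun s => (2*(f x - c))*(f (upd s x) - f x)) μ :=
            Integrable.of_finite
          rw [integral_add h2 (integrable_const _), integral_const_mul,
            integral_const, probReal_univ, smul_eq_mul, one_mul]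
      _ ≤ B^2 + (0 + (f x - c)^2) := by
          rw [hmart0, mul_zero]
          gcongr
          have : ∫ s, (f (upd s x) - f x)^2 ∂μ ≤ ∫ _s, B^2 ∂μ := by
            refine integral_mono_ae (Integrable.of_finite) (integrable_const _) ?_
            filter_upwards [hgood] with s hs
            have h := hbound x s hx hs
            have := abs_le.1 h
            nlinarith [this.1, this.2]
          calc ∫ s, (f (upd s x) - f x)^2 ∂μ ≤ ∫ _s, B^2 ∂μ := this
            _ = B^2 := by
              rw [integral_const, probReal_univ, smul_eq_mul, one_mul]
      _ = (f x - c)^2 + B^2 := by ring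
  -- main induction
  have main : ∀ t, ∫ a, (f (T x0 upd t a) - c)^2 ∂(ν t) ≤ t * B^2 := by
    intro t
    induction t with
    | zero =>
      haveI := hνprob 0
      simp [T, hc]
    | succ t ih =>
      haveI := hνprob t
      rw [key_int t (fun a => (f (T x0 upd (t+1) a) - c)^2)]
      have hmono : ∫ a, (∫ s, (f (T x0 upd (t+1) (Fin.snoc a s)) - c)^2 ∂μ) ∂(ν t)
          ≤ ∫ a, ((f (T x0 upd t a) - c)^2 + B^2) ∂(ν t) := by
        refine integral_mono_ae (Integrable.of_finite) (Integrable.of_finite) ?_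
        filter_upwards [hgoodset t] with a ha
        have hInva : Inv (T x0 upd t a) := hInvT t a ha
        have := hstep _ hInva
        calc ∫ s, (f (T x0 upd (t+1) (Fin.snoc a s)) - c)^2 ∂μ
            = ∫ s, (f (upd s (T x0 upd t a)) - c)^2 ∂μ := by
              congr 1; funext s; rw [T_snoc]
          _ ≤ (f (T x0 upd t a) - c)^2 + B^2 := this
      refine le_trans hmono ?_
      rw [integral_add (Integrable.of_finite) (integrable_const _), integral_const,
        probReal_univ, smul_eq_mul, one_mul]
      push_cast
      linarith [ih]
  -- conclude
  have hXeq : (fun ω => f (absTraj x0 upd (fun i => steps i ω) t))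
      = (fun a => f (T x0 upd t a)) ∘ (Y t) := by
    funext ω
    simp only [Function.comp]
    rw [absTraj_eq_T]
  rw [hXeq]
  haveI := hνprob t
  have hF : Measurable ((fun a => f (T x0 upd t a)) : (Fin t → S) → ℝ) :=
    measurable_of_finite _
  have hMem : MemLp ((fun a => f (T x0 upd t a)) ∘ (Y t)) 2 Pr := by
    obtain ⟨C, hC⟩ : ∃ C, ∀ a : Fin t → S, |f (T x0 upd t a)| ≤ C := by
      refine ⟨Finset.univ.sup' ⟨Classical.arbitrary _, Finset.mem_univ _⟩
        (fun a => |f (T x0 upd t a)|), fun a => Finset.le_sup' (fun a => |f (T x0 upd t a)|) (Finset.mem_univ a)⟩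
    refine memLp_of_bounded (a := -C) (b := C) ?_ ?_ 2
    · refine Filter.Eventually.of_forall fun ω => ?_
      have := abs_le.1 (hC (Y t ω))
      exact ⟨this.1, this.2⟩
    · exact (hF.comp (hYmeas t)).aestronglyMeasurable
  refine le_trans (variance_le_integral_sq_sub Pr _ hMem c) ?_
  have : ∫ ω, (((fun a => f (T x0 upd t a)) ∘ (Y t)) ω - c)^2 ∂Pr
      = ∫ a, (f (T x0 upd t a) - c)^2 ∂(ν t) := by
    rw [hν]
    rw [integral_map (hYmeas t).aemeasurable (measurable_of_finite _).aestronglyMeasurable]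
    rfl
  rw [this]
  exact main t

end Core


-- combinatorial helper
lemma card_filter_mem_powersetCard {α : Type*} [DecidableEq α] (A : Finset α) (k : ℕ)
    (hk : 1 ≤ k) {v : α} (hv : v ∈ A) :
    ((A.powersetCard k).filter (fun S => v ∈ S)).card = (A.card - 1).choose (k-1) := by
  rw [← Finset.card_erase_of_mem hv, ← Finset.card_powersetCard (k-1) (A.erase v)]
  apply Finset.card_bij (fun S _ => S.erase v)
  · intro S hS
    simp only [Finset.mem_filter, Finset.mem_powersetCard] at hS
    rw [Finset.mem_powersetCard]
    exact ⟨Finset.erase_subset_erase v hS.1.1,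
      by rw [Finset.card_erase_of_mem hS.2, hS.1.2]⟩
  · intro S hS S' hS' h
    simp only [Finset.mem_filter, Finset.mem_powersetCard] at hS hS'
    rw [← Finset.insert_erase hS.2, ← Finset.insert_erase hS'.2, h]
  · intro T hT
    rw [Finset.mem_powersetCard] at hT
    have hvT : v ∉ T := fun h => (Finset.mem_erase.1 (hT.1 h)).1 rfl
    refine ⟨insert v T, ?_, by rw [Finset.erase_insert hvT]⟩
    simp only [Finset.mem_filter, Finset.mem_powersetCard]
    refine ⟨⟨?_, ?_⟩, Finset.mem_insert_self _ _⟩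
    · intro w hw
      rcases Finset.mem_insert.1 hw with h | h
      · exact h ▸ hv
      · exact Finset.mem_of_mem_erase (hT.1 h)
    · rw [Finset.card_insert_of_notMem hvT, hT.2]
      omega

lemma sum_powersetCard_sum {α : Type*} [DecidableEq α] (A : Finset α) (k : ℕ) (hk : 1 ≤ k)
    (g : α → ℝ) :
    ∑ S ∈ A.powersetCard k, ∑ v ∈ S, g v
      = ((A.card - 1).choose (k-1) : ℝ) * ∑ v ∈ A, g v := by
  have h1 : ∀ S ∈ A.powersetCard k, ∑ v ∈ S, g v = ∑ v ∈ A, (if v ∈ S then g v else 0) := by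
    intro S hS
    rw [Finset.sum_ite_mem, Finset.inter_eq_right.2 (Finset.mem_powersetCard.1 hS).1]
  rw [Finset.sum_congr rfl h1, Finset.sum_comm]
  rw [Finset.mul_sum]
  apply Finset.sum_congr rfl
  intro v hv
  rw [← Finset.sum_filter, Finset.sum_const, ← card_filter_mem_powersetCard A k hk hv]
  simp [mul_comm]

lemma choose_mul_eq {d k : ℕ} (hk : 1 ≤ k) (hkd : k ≤ d) :
    d.choose k * k = d * (d-1).choose (k-1) := by
  obtain ⟨d', rfl⟩ : ∃ d', d = d' + 1 := ⟨d - 1, by omega⟩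
  obtain ⟨k', rfl⟩ : ∃ k', k = k' + 1 := ⟨k - 1, by omega⟩
  simpa [Nat.succ_sub_one, mul_comm] using (Nat.add_one_mul_choose_eq d' k').symm

-- neighbor double sum
lemma sum_neighbor_sum {n : ℕ} (G : SimpleGraph (Fin n)) [DecidableRel G.Adj] (g : Fin n → ℝ) :
    ∑ u, ∑ v ∈ G.neighborFinset u, g v = ∑ v, (G.degree v : ℝ) * g v := by
  have h2 : ∀ u, ∑ v ∈ G.neighborFinset u, g v = ∑ v, (if G.Adj u v then g v else 0) := by
    intro u
    rw [show G.neighborFinset u = Finset.univ.filter (fun v => G.Adj u v) by ext v; simp,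
      Finset.sum_filter]
  rw [Finset.sum_congr rfl (fun u _ => h2 u), Finset.sum_comm]
  apply Finset.sum_congr rfl
  intro v _
  have h3 : ∀ u, (if G.Adj u v then g v else 0) = (if u ∈ G.neighborFinset v then g v else 0) := by
    intro u; simp [SimpleGraph.mem_neighborFinset, G.adj_comm]
  rw [Finset.sum_congr rfl (fun u _ => h3 u), Finset.sum_ite_mem, Finset.univ_inter,
    Finset.sum_const, SimpleGraph.card_neighborFinset_eq_degree, nsmul_eq_mul]


set_option maxHeartbeats 1000000

open scoped ENNReal NNReal

instance finsetFinMSC (n : ℕ) : MeasurableSingletonClass (Finset (Fin n)) :=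
  ⟨fun _ => MeasurableSpace.measurableSet_top⟩

section NodePMF
variable {n : ℕ} (G : SimpleGraph (Fin n)) [DecidableRel G.Adj]
  (hne : Nonempty (Fin n)) (k : ℕ) (hk : ∀ u, k ≤ G.degree u)

lemma nodeStepPMF_apply (u : Fin n) (Sset : Finset (Fin n)) :
    nodeStepPMF G hne k hk (u, Sset)
      = if Sset ∈ (G.neighborFinset u).powersetCard k
        then ((n : ℝ≥0∞) * ((G.degree u).choose k : ℝ≥0∞))⁻¹ else 0 := by
  classical
  simp only [nodeStepPMF, PMF.bind_apply, PMF.map_apply, PMF.uniformOfFintype_apply,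
    PMF.uniformOfFinset_apply, tsum_fintype]
  rw [Finset.sum_eq_single u]
  · rw [Finset.sum_eq_single Sset]
    · rw [if_pos rfl, Finset.card_powersetCard, SimpleGraph.card_neighborFinset_eq_degree,
        Fintype.card_fin, mul_ite, mul_zero]
      congr 1
      rw [ENNReal.mul_inv (Or.inr (by simp)) (Or.inl (by simp))]
    · intro b _ hb
      rw [if_neg fun h' => hb (congrArg Prod.snd h').symm]
    · intro h; exact absurd (Finset.mem_univ _) h
  · intro b _ hb
    rw [Finset.sum_eq_zero, mul_zero]
    intro a1 _
    rw [if_neg fun h' => hb.symm (congrArg Prod.fst h')]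
  · intro h; exact absurd (Finset.mem_univ _) h

lemma integral_nodeStepPMF (g : NodeStep n → ℝ) :
    ∫ s, g s ∂((nodeStepPMF G hne k hk).toMeasure)
      = ∑ u, ∑ S ∈ (G.neighborFinset u).powersetCard k,
          ((n : ℝ) * ((G.degree u).choose k : ℝ))⁻¹ * g (u, S) := by
  classical
  rw [PMF.integral_eq_sum, Fintype.sum_prod_type]
  apply Finset.sum_congr rfl
  intro u _
  have h1 : ∀ S : Finset (Fin n),
      ((nodeStepPMF G hne k hk (u, S)).toReal • g (u, S))
        = if S ∈ (G.neighborFinset u).powersetCard k then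
            ((n : ℝ) * ((G.degree u).choose k : ℝ))⁻¹ * g (u, S) else 0 := by
    intro S
    rw [nodeStepPMF_apply G hne k hk, apply_ite ENNReal.toReal]
    by_cases h : S ∈ (G.neighborFinset u).powersetCard k
    · rw [if_pos h, if_pos h, smul_eq_mul, ENNReal.toReal_inv, ENNReal.toReal_mul]
      simp
    · rw [if_neg h, if_neg h, ENNReal.toReal_zero, zero_smul]
  rw [Finset.sum_congr rfl (fun S _ => h1 S), Finset.sum_ite_mem, Finset.univ_inter]

lemma Mdeg_nodeUpdate (α : ℝ) (u : Fin n) (S : Finset (Fin n)) (x : Fin n → ℝ) :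
    Mdeg G (nodeUpdate α k (u, S) x)
      = Mdeg G x + piRW G u * ((α - 1) * x u + ((1-α)/k) * ∑ v ∈ S, x v) := by
  classical
  have h : ∀ w, piRW G w * (nodeUpdate α k (u, S) x w)
      = piRW G w * x w
        + (if w = u then piRW G u * ((α - 1) * x u + ((1-α)/k) * ∑ v ∈ S, x v) else 0) := by
    intro w
    by_cases hw : w = u
    · subst hw
      have hx : nodeUpdate α k (w, S) x w = α * x w + ((1-α)/k) * ∑ v ∈ S, x v := by
        simp [nodeUpdate]
      rw [hx, if_pos rfl]
      ring
    · have hx : nodeUpdate α k (u, S) x w = x w := by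
        simp [nodeUpdate, hw]
      rw [hx, if_neg hw]
      ring
  unfold Mdeg
  rw [Finset.sum_congr rfl (fun w _ => h w), Finset.sum_add_distrib,
    Finset.sum_ite_eq' Finset.univ u, if_pos (Finset.mem_univ u)]

lemma node_mart (hn0 : 0 < n) (hm : 0 < G.edgeFinset.card) (hk1 : 1 ≤ k) (α : ℝ)
    (x : Fin n → ℝ) :
    ∫ s, Mdeg G (nodeUpdate α k s x) ∂((nodeStepPMF G hne k hk).toMeasure) = Mdeg G x := by
  classical
  rw [integral_nodeStepPMF]
  have hnR : (n : ℝ) ≠ 0 := Nat.cast_ne_zero.2 hn0.ne'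
  have hmR : (G.edgeFinset.card : ℝ) ≠ 0 := Nat.cast_ne_zero.2 hm.ne'
  have hkR : (k : ℝ) ≠ 0 := Nat.cast_ne_zero.2 (by omega)
  have hin : ∀ u, ∑ S ∈ (G.neighborFinset u).powersetCard k,
      ((n : ℝ) * ((G.degree u).choose k : ℝ))⁻¹ * Mdeg G (nodeUpdate α k (u, S) x)
      = (1/(n:ℝ)) * Mdeg G x + (1-α)/(2*(G.edgeFinset.card:ℝ)*n) *
          ((∑ v ∈ G.neighborFinset u, x v) - (G.degree u : ℝ) * x u) := by
    intro u
    have hCpos : 0 < (G.degree u).choose k := Nat.choose_pos (hk u)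
    have hCR : ((G.degree u).choose k : ℝ) ≠ 0 := Nat.cast_ne_zero.2 hCpos.ne'
    have hdR : ((G.degree u : ℝ)) ≠ 0 := Nat.cast_ne_zero.2 (by have := hk u; omega)
    have hkey : ((G.degree u).choose k : ℝ) * k
        = (G.degree u : ℝ) * ((G.degree u - 1).choose (k-1) : ℝ) := by
      exact_mod_cast choose_mul_eq hk1 (hk u)
    set w : ℝ := ((n : ℝ) * ((G.degree u).choose k : ℝ))⁻¹ with hw
    calc ∑ S ∈ (G.neighborFinset u).powersetCard k, w * Mdeg G (nodeUpdate α k (u, S) x)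
        = ∑ S ∈ (G.neighborFinset u).powersetCard k,
            ((w * Mdeg G x + w * piRW G u * ((α-1) * x u))
              + (w * piRW G u * ((1-α)/k)) * ∑ v ∈ S, x v) := by
          apply Finset.sum_congr rfl
          intro S _
          rw [Mdeg_nodeUpdate G k]
          ring
      _ = ((G.degree u).choose k : ℝ) * (w * Mdeg G x + w * piRW G u * ((α-1) * x u))
          + (w * piRW G u * ((1-α)/k)) *
            (((G.degree u - 1).choose (k-1) : ℝ) * ∑ v ∈ G.neighborFinset u, x v) := by
          rw [Finset.sum_add_distrib, Finset.sum_const, ← Finset.mul_sum,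
            sum_powersetCard_sum _ k hk1 x, Finset.card_powersetCard,
            SimpleGraph.card_neighborFinset_eq_degree, nsmul_eq_mul]
      _ = (((G.degree u).choose k : ℝ) * w) * Mdeg G x
          + (((G.degree u).choose k : ℝ) * w) * (piRW G u * ((α-1) * x u))
          + (w * piRW G u * ((1-α)/k) * ((G.degree u - 1).choose (k-1) : ℝ))
            * ∑ v ∈ G.neighborFinset u, x v := by ring
      _ = (1/(n:ℝ)) * Mdeg G x + (1-α)/(2*(G.edgeFinset.card:ℝ)*n) *
          ((∑ v ∈ G.neighborFinset u, x v) - (G.degree u : ℝ) * x u) := by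
          have e1 : ((G.degree u).choose k : ℝ) * w = 1/(n:ℝ) := by
            rw [hw]; field_simp
          have e2 : w * piRW G u * ((1-α)/k) * ((G.degree u - 1).choose (k-1) : ℝ)
              = (1-α)/(2*(G.edgeFinset.card:ℝ)*n) := by
            calc w * piRW G u * ((1-α)/k) * ((G.degree u - 1).choose (k-1) : ℝ)
                = (1-α) * ((G.degree u : ℝ) * ((G.degree u - 1).choose (k-1) : ℝ))
                    * (((G.degree u).choose k : ℝ)⁻¹ * (k:ℝ)⁻¹)
                    * ((n:ℝ)⁻¹ * (2*(G.edgeFinset.card:ℝ))⁻¹) := by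
                  rw [hw, piRW, mul_inv]; ring
              _ = (1-α) * (((G.degree u).choose k : ℝ) * (k:ℝ))
                    * (((G.degree u).choose k : ℝ)⁻¹ * (k:ℝ)⁻¹)
                    * ((n:ℝ)⁻¹ * (2*(G.edgeFinset.card:ℝ))⁻¹) := by rw [hkey]
              _ = (1-α) * ((((G.degree u).choose k : ℝ) * ((G.degree u).choose k : ℝ)⁻¹)
                    * ((k:ℝ) * (k:ℝ)⁻¹))
                    * ((n:ℝ)⁻¹ * (2*(G.edgeFinset.card:ℝ))⁻¹) := by ring
              _ = (1-α)/(2*(G.edgeFinset.card:ℝ)*n) := by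
                  rw [mul_inv_cancel₀ hCR, mul_inv_cancel₀ hkR]
                  field_simp
          rw [e1, e2, piRW]
          field_simp
          ring
  rw [Finset.sum_congr rfl (fun u _ => hin u), Finset.sum_add_distrib, Finset.sum_const,
    Finset.card_univ, Fintype.card_fin, nsmul_eq_mul, ← Finset.mul_sum,
    Finset.sum_sub_distrib, sum_neighbor_sum, sub_self, mul_zero, add_zero,
    one_div, mul_inv_cancel_left₀ hnR]


lemma nodeStepPMF_support_subset :
    (nodeStepPMF G hne k hk).support
      ⊆ {s : NodeStep n | s.2 ∈ (G.neighborFinset s.1).powersetCard k} := by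
  intro s hs
  simp only [nodeStepPMF, PMF.support_bind, PMF.support_map, PMF.support_uniformOfFinset,
    PMF.support_uniformOfFintype, Set.mem_iUnion, Set.mem_image] at hs
  obtain ⟨u, -, S, hS, rfl⟩ := hs
  simpa using hS

lemma node_inv_step {α : ℝ} (hα : α ∈ Set.Ioo (0:ℝ) 1) (hk1 : 1 ≤ k) {lo hi : ℝ}
    (x : Fin n → ℝ) (hx : ∀ w, x w ∈ Set.Icc lo hi) (u : Fin n) (S : Finset (Fin n))
    (hS : S ∈ (G.neighborFinset u).powersetCard k) :
    ∀ w, nodeUpdate α k (u, S) x w ∈ Set.Icc lo hi := by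
  intro w
  have hkR : (0:ℝ) < k := by exact_mod_cast hk1
  have hcard : S.card = k := (Finset.mem_powersetCard.1 hS).2
  have hsum_le : ∑ v ∈ S, x v ≤ (k : ℝ) * hi := by
    calc ∑ v ∈ S, x v ≤ S.card • hi := Finset.sum_le_card_nsmul S x hi (fun v _ => (hx v).2)
      _ = (k : ℝ) * hi := by rw [hcard, nsmul_eq_mul]
  have hle_sum : (k : ℝ) * lo ≤ ∑ v ∈ S, x v := by
    calc (k : ℝ) * lo = S.card • lo := by rw [hcard, nsmul_eq_mul]
      _ ≤ ∑ v ∈ S, x v := Finset.card_nsmul_le_sum S x lo (fun v _ => (hx v).1)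
  by_cases hw : w = u
  · subst hw
    have hval : nodeUpdate α k (w, S) x w = α * x w + ((1-α)/k) * ∑ v ∈ S, x v := by
      simp [nodeUpdate]
    rw [hval]
    have h1 : (0:ℝ) < 1 - α := by linarith [hα.2]
    constructor
    · have : ((1-α)/k) * ((k:ℝ) * lo) ≤ ((1-α)/k) * ∑ v ∈ S, x v := by
        apply mul_le_mul_of_nonneg_left hle_sum (le_of_lt (div_pos h1 hkR))
      have h2 : ((1-α)/k) * ((k:ℝ) * lo) = (1-α) * lo := by field_simp
      nlinarith [(hx w).1, hα.1, hα.2]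
    · have : ((1-α)/k) * ∑ v ∈ S, x v ≤ ((1-α)/k) * ((k:ℝ) * hi) := by
        apply mul_le_mul_of_nonneg_left hsum_le (le_of_lt (div_pos h1 hkR))
      have h2 : ((1-α)/k) * ((k:ℝ) * hi) = (1-α) * hi := by field_simp
      nlinarith [(hx w).2, hα.1, hα.2]
  · have hval : nodeUpdate α k (u, S) x w = x w := by simp [nodeUpdate, hw]
    rw [hval]
    exact hx w

lemma node_bound {α : ℝ} (hα : α ∈ Set.Ioo (0:ℝ) 1) (hk1 : 1 ≤ k) (hm : 0 < G.edgeFinset.card)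
    {lo hi : ℝ} (x : Fin n → ℝ) (hx : ∀ w, x w ∈ Set.Icc lo hi) (u : Fin n)
    (S : Finset (Fin n)) (hS : S ∈ (G.neighborFinset u).powersetCard k) :
    |Mdeg G (nodeUpdate α k (u, S) x) - Mdeg G x|
      ≤ (G.maxDegree : ℝ) * (hi - lo) / (2 * (G.edgeFinset.card : ℝ)) := by
  have hkR : (0:ℝ) < k := by exact_mod_cast hk1
  have hcard : S.card = k := (Finset.mem_powersetCard.1 hS).2
  have hmR : (0:ℝ) < 2 * (G.edgeFinset.card : ℝ) := by positivity
  have hlohi : lo ≤ hi := le_trans (hx u).1 (hx u).2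
  have hsum_le : ∑ v ∈ S, x v ≤ (k : ℝ) * hi := by
    calc ∑ v ∈ S, x v ≤ S.card • hi := Finset.sum_le_card_nsmul S x hi (fun v _ => (hx v).2)
      _ = (k : ℝ) * hi := by rw [hcard, nsmul_eq_mul]
  have hle_sum : (k : ℝ) * lo ≤ ∑ v ∈ S, x v := by
    calc (k : ℝ) * lo = S.card • lo := by rw [hcard, nsmul_eq_mul]
      _ ≤ ∑ v ∈ S, x v := Finset.card_nsmul_le_sum S x lo (fun v _ => (hx v).1)
  rw [Mdeg_nodeUpdate G k, add_sub_cancel_left, abs_mul]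
  have h1 : (0:ℝ) < 1 - α := by linarith [hα.2]
  have hπ : |piRW G u| ≤ (G.maxDegree : ℝ) / (2 * (G.edgeFinset.card : ℝ)) := by
    rw [piRW, abs_of_nonneg (by positivity)]
    gcongr
    exact_mod_cast G.degree_le_maxDegree u
  have hinner : |(α - 1) * x u + ((1-α)/k) * ∑ v ∈ S, x v| ≤ hi - lo := by
    have hrw : (α - 1) * x u + ((1-α)/k) * ∑ v ∈ S, x v
        = (1-α) * ((∑ v ∈ S, x v)/k - x u) := by
      field_simp
      ring
    rw [hrw, abs_mul, abs_of_nonneg (le_of_lt h1)]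
    have hlo : lo ≤ (∑ v ∈ S, x v)/k := (le_div_iff₀ hkR).2 (by
      calc lo * k = (k:ℝ) * lo := by ring
        _ ≤ _ := hle_sum)
    have hhi : (∑ v ∈ S, x v)/k ≤ hi := (div_le_iff₀ hkR).2 (by
      calc ∑ v ∈ S, x v ≤ (k:ℝ) * hi := hsum_le
        _ = hi * k := by ring)
    have habs : |(∑ v ∈ S, x v)/k - x u| ≤ hi - lo := by
      rw [abs_le]
      constructor
      · linarith [(hx u).2]
      · linarith [(hx u).1]
    nlinarith [abs_nonneg ((∑ v ∈ S, x v)/k - x u), hα.1, habs]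
  calc |piRW G u| * |(α - 1) * x u + ((1-α)/k) * ∑ v ∈ S, x v|
      ≤ ((G.maxDegree : ℝ) / (2 * (G.edgeFinset.card : ℝ))) * (hi - lo) :=
        mul_le_mul hπ hinner (abs_nonneg _) (by positivity)
    _ = (G.maxDegree : ℝ) * (hi - lo) / (2 * (G.edgeFinset.card : ℝ)) := by ring

end NodePMF

section EdgeModel
variable {n : ℕ} (G : SimpleGraph (Fin n)) [DecidableRel G.Adj]

lemma integral_uniformOfFinset {β : Type} [Fintype β] [MeasurableSpace β]
    [MeasurableSingletonClass β] (s : Finset β) (hs : s.Nonempty) (g : β → ℝ) :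
    ∫ a, g a ∂((PMF.uniformOfFinset s hs).toMeasure)
      = ∑ a ∈ s, (s.card : ℝ)⁻¹ * g a := by
  classical
  rw [PMF.integral_eq_sum]
  have h1 : ∀ a : β, (PMF.uniformOfFinset s hs a).toReal • g a
      = if a ∈ s then (s.card : ℝ)⁻¹ * g a else 0 := by
    intro a
    rw [PMF.uniformOfFinset_apply, apply_ite ENNReal.toReal]
    by_cases h : a ∈ s
    · rw [if_pos h, if_pos h, smul_eq_mul, ENNReal.toReal_inv]
      simp
    · rw [if_neg h, if_neg h, ENNReal.toReal_zero, zero_smul]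
  rw [Finset.sum_congr rfl (fun a _ => h1 a), Finset.sum_ite_mem, Finset.univ_inter]

lemma Avg_edgeUpdate (α : ℝ) (e : EdgeStep n) (x : Fin n → ℝ) :
    Avg (edgeUpdate α e x) = Avg x + (1/(n:ℝ)) * ((α - 1) * x e.1 + (1-α) * x e.2) := by
  classical
  have h : ∀ w, edgeUpdate α e x w
      = x w + (if w = e.1 then (α - 1) * x e.1 + (1-α) * x e.2 else 0) := by
    intro w
    by_cases hw : w = e.1
    · have hval : edgeUpdate α e x w = α * x w + (1-α) * x e.2 := by
        simp [edgeUpdate, hw]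
      rw [hval, if_pos hw, hw]
      ring
    · have hval : edgeUpdate α e x w = x w := by simp [edgeUpdate, hw]
      rw [hval, if_neg hw, add_zero]
  unfold Avg
  rw [Finset.sum_congr rfl (fun w _ => h w), Finset.sum_add_distrib,
    Finset.sum_ite_eq' Finset.univ e.1, if_pos (Finset.mem_univ _)]
  ring

lemma edge_mart (hconn : G.Connected) (hn : 1 < n) (α : ℝ) (x : Fin n → ℝ) :
    ∫ e, Avg (edgeUpdate α e x) ∂((edgeStepPMF G hconn hn).toMeasure) = Avg x := by
  classical
  unfold edgeStepPMF
  rw [integral_uniformOfFinset]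
  set E := Finset.univ.filter (fun p : EdgeStep n => G.Adj p.1 p.2) with hE
  have hcard : (0:ℝ) < E.card := by
    have := exists_adj_pair G hconn hn
    exact_mod_cast Finset.card_pos.2 this
  have h1 : ∀ e ∈ E, (E.card : ℝ)⁻¹ * Avg (edgeUpdate α e x)
      = (E.card : ℝ)⁻¹ * Avg x
        + ((E.card : ℝ)⁻¹ * ((1-α)/(n:ℝ))) * (x e.2 - x e.1) := by
    intro e _
    rw [Avg_edgeUpdate]
    ring
  rw [Finset.sum_congr rfl h1, Finset.sum_add_distrib, Finset.sum_const, ← Finset.mul_sum]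
  have h2 : ∑ e ∈ E, (x e.2 - x e.1) = 0 := by
    apply Finset.sum_involution (fun e _ => Prod.swap e)
    · intro e _
      simp only [Prod.fst_swap, Prod.snd_swap]
      ring
    · intro e he _
      simp only [hE, Finset.mem_filter] at he
      intro hcontra
      have h3 : e.1 ≠ e.2 := G.ne_of_adj he.2
      exact h3 (congrArg Prod.fst hcontra).symm
    · intro e he
      simp only [hE, Finset.mem_filter, Prod.fst_swap, Prod.snd_swap] at he ⊢
      exact ⟨Finset.mem_univ _, he.2.symm⟩
    · intro e _
      rfl
  rw [h2, mul_zero, add_zero, nsmul_eq_mul, ← mul_assoc,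
    mul_inv_cancel₀ (ne_of_gt hcard), one_mul]

lemma edge_inv_step {α : ℝ} (hα : α ∈ Set.Ioo (0:ℝ) 1) {lo hi : ℝ}
    (x : Fin n → ℝ) (hx : ∀ w, x w ∈ Set.Icc lo hi) (e : EdgeStep n) :
    ∀ w, edgeUpdate α e x w ∈ Set.Icc lo hi := by
  intro w
  by_cases hw : w = e.1
  · have hval : edgeUpdate α e x w = α * x w + (1-α) * x e.2 := by
      simp [edgeUpdate, hw]
    rw [hval]
    constructor
    · nlinarith [(hx w).1, (hx e.2).1, hα.1, hα.2]
    · nlinarith [(hx w).2, (hx e.2).2, hα.1, hα.2]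
  · have hval : edgeUpdate α e x w = x w := by simp [edgeUpdate, hw]
    rw [hval]
    exact hx w

lemma edge_bound {α : ℝ} (hα : α ∈ Set.Ioo (0:ℝ) 1) (hn : 0 < n) {lo hi : ℝ}
    (x : Fin n → ℝ) (hx : ∀ w, x w ∈ Set.Icc lo hi) (e : EdgeStep n) :
    |Avg (edgeUpdate α e x) - Avg x| ≤ (hi - lo) / n := by
  have hnR : (0:ℝ) < n := by exact_mod_cast hn
  rw [Avg_edgeUpdate, add_sub_cancel_left, abs_mul]
  have h1 : (0:ℝ) < 1 - α := by linarith [hα.2]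
  have hrw : (α - 1) * x e.1 + (1-α) * x e.2 = (1-α) * (x e.2 - x e.1) := by ring
  rw [hrw, abs_mul, abs_of_nonneg (le_of_lt h1), abs_of_nonneg (by positivity : (0:ℝ) ≤ 1/(n:ℝ))]
  have habs : |x e.2 - x e.1| ≤ hi - lo := by
    rw [abs_le]
    constructor
    · linarith [(hx e.2).1, (hx e.1).2]
    · linarith [(hx e.2).2, (hx e.1).1]
  have : (1-α) * |x e.2 - x e.1| ≤ hi - lo := by
    nlinarith [abs_nonneg (x e.2 - x e.1), hα.1]
  calc (1/(n:ℝ)) * ((1-α) * |x e.2 - x e.1|) ≤ (1/(n:ℝ)) * (hi - lo) := by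
        apply mul_le_mul_of_nonneg_left this (by positivity)
    _ = (hi - lo)/n := by ring

end EdgeModel

section FinalHelpers

lemma nodeTraj_eq_absTraj {n : ℕ} (α : ℝ) (k : ℕ) (ξ0 : Fin n → ℝ) (ω : ℕ → NodeStep n)
    (t : ℕ) : nodeTraj α k ξ0 ω t = VarAux.absTraj ξ0 (nodeUpdate α k) ω t := by
  induction t with
  | zero => rfl
  | succ t ih => simp only [nodeTraj, VarAux.absTraj, ih]

lemma edgeTraj_eq_absTraj {n : ℕ} (α : ℝ) (ξ0 : Fin n → ℝ) (ω : ℕ → EdgeStep n)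
    (t : ℕ) : edgeTraj α ξ0 ω t = VarAux.absTraj ξ0 (edgeUpdate α) ω t := by
  induction t with
  | zero => rfl
  | succ t ih => simp only [edgeTraj, VarAux.absTraj, ih]

end FinalHelpers


/-- **Corollary 1(ii)–(iii) (time-dependent variance bounds).**
Let `K = max_u ξ_u(0) - min_u ξ_u(0)` be the initial discrepancy. Then:
(a) in the Node Model on a connected graph `G` with maximum degree `d_max`, the
degree-weighted average `M(t) = Σ_u (d_u/(2m)) ξ_u(t)` satisfies
`Var(M(t)) ≤ t ( d_max K/(2m) )²` for all `t ≥ 0`; and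
(b) in the Edge Model on a connected graph `G`, the average `Avg(t) = (1/n) Σ_u ξ_u(t)`
satisfies `Var(Avg(t)) ≤ (t/n²) K²` for all `t ≥ 0`. -/
theorem variance_time_dependent_bounds {n : ℕ} (hn : 1 < n)
    (G : SimpleGraph (Fin n)) [DecidableRel G.Adj] (hconn : G.Connected)
    (α : ℝ) (hα : α ∈ Set.Ioo (0 : ℝ) 1)
    (k : ℕ) (hk1 : 1 ≤ k) (hk : ∀ u, k ≤ G.degree u)
    (ξ0 : Fin n → ℝ)
    (K : ℝ)
    (hK : K = Finset.univ.sup' ⟨⟨0, by omega⟩, Finset.mem_univ _⟩ ξ0 -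
              Finset.univ.inf' ⟨⟨0, by omega⟩, Finset.mem_univ _⟩ ξ0)
    (Ω : Type) (mΩ : MeasurableSpace Ω) (Pr : Measure Ω) (hPr : IsProbabilityMeasure Pr)
    (steps : ℕ → Ω → NodeStep n) (hmeas : ∀ t, Measurable (steps t))
    (hiid : iIndepFun steps Pr)
    (hdist : ∀ t, Measure.map (steps t) Pr = (nodeStepPMF G hconn.nonempty k hk).toMeasure)
    (Ω' : Type) (mΩ' : MeasurableSpace Ω') (Pr' : Measure Ω')
    (hPr' : IsProbabilityMeasure Pr')
    (steps' : ℕ → Ω' → EdgeStep n) (hmeas' : ∀ t, Measurable (steps' t))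
    (hiid' : iIndepFun steps' Pr')
    (hdist' : ∀ t, Measure.map (steps' t) Pr' = (edgeStepPMF G hconn hn).toMeasure) :
    (∀ t : ℕ,
        variance (fun ω => Mdeg G (nodeTraj α k ξ0 (fun s => steps s ω) t)) Pr ≤
          (t : ℝ) * ((G.maxDegree : ℝ) * K / (2 * (G.edgeFinset.card : ℝ))) ^ 2) ∧
    (∀ t : ℕ,
        variance (fun ω => Avg (edgeTraj α ξ0 (fun s => steps' s ω) t)) Pr' ≤
          ((t : ℝ) / (n : ℝ) ^ 2) * K ^ 2) := by
  classical
  haveI hne : Nonempty (Fin n) := ⟨⟨0, by omega⟩⟩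
  set lo : ℝ := Finset.univ.inf' ⟨⟨0, by omega⟩, Finset.mem_univ _⟩ ξ0 with hlo
  set hi : ℝ := Finset.univ.sup' ⟨⟨0, by omega⟩, Finset.mem_univ _⟩ ξ0 with hhi
  have hx0 : ∀ w, ξ0 w ∈ Set.Icc lo hi := fun w =>
    ⟨Finset.inf'_le _ (Finset.mem_univ w), Finset.le_sup' _ (Finset.mem_univ w)⟩
  have hKlohi : K = hi - lo := hK
  have hKnn : 0 ≤ K := by
    rw [hKlohi]
    have := hx0 ⟨0, by omega⟩
    linarith [this.1, this.2]
  have hm : 0 < G.edgeFinset.card := by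
    obtain ⟨⟨u, v⟩, hp⟩ := exists_adj_pair G hconn hn
    rw [Finset.mem_filter] at hp
    exact Finset.card_pos.2 ⟨s(u, v), by rw [SimpleGraph.mem_edgeFinset]; exact hp.2⟩
  have hmR : (0:ℝ) < (G.edgeFinset.card : ℝ) := by exact_mod_cast hm
  constructor
  · -- Node model
    intro t
    haveI : IsProbabilityMeasure (nodeStepPMF G hconn.nonempty k hk).toMeasure :=
      PMF.toMeasure.isProbabilityMeasure _
    have hGood : (nodeStepPMF G hconn.nonempty k hk).toMeasure
        {s : NodeStep n | s.2 ∈ (G.neighborFinset s.1).powersetCard k} = 1 := by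
      refine (PMF.toMeasure_apply_eq_one_iff _ (MeasurableSet.of_discrete)).2 ?_
      exact nodeStepPMF_support_subset G hconn.nonempty k hk
    have hB : (0:ℝ) ≤ (G.maxDegree : ℝ) * K / (2 * (G.edgeFinset.card : ℝ)) := by positivity
    have hb := Core.abstract_variance_bound (μ := (nodeStepPMF G hconn.nonempty k hk).toMeasure)
      hmeas hiid hdist ξ0 (nodeUpdate α k) (Mdeg G)
      {s : NodeStep n | s.2 ∈ (G.neighborFinset s.1).powersetCard k} hGood
      (fun x => ∀ w, x w ∈ Set.Icc lo hi) hx0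
      (fun x s hx hs => by
        obtain ⟨u, S⟩ := s
        exact node_inv_step G k hα hk1 x hx u S hs)
      ((G.maxDegree : ℝ) * K / (2 * (G.edgeFinset.card : ℝ))) hB
      (fun x _ => node_mart G hconn.nonempty k hk (by omega) hm hk1 α x)
      (fun x s hx hs => by
        obtain ⟨u, S⟩ := s
        rw [hKlohi]
        exact node_bound G k hα hk1 hm x hx u S hs)
      t
    have hfun : (fun ω => Mdeg G (nodeTraj α k ξ0 (fun s => steps s ω) t))
        = fun ω => Mdeg G (VarAux.absTraj ξ0 (nodeUpdate α k) (fun i => steps i ω) t) := by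
      funext ω
      rw [nodeTraj_eq_absTraj]
    rw [hfun]
    exact hb
  · -- Edge model
    intro t
    haveI : IsProbabilityMeasure (edgeStepPMF G hconn hn).toMeasure :=
      PMF.toMeasure.isProbabilityMeasure _
    have hGood : (edgeStepPMF G hconn hn).toMeasure
        {e : EdgeStep n | G.Adj e.1 e.2} = 1 := by
      refine (PMF.toMeasure_apply_eq_one_iff _ (MeasurableSet.of_discrete)).2 ?_
      intro e he
      rw [edgeStepPMF, PMF.support_uniformOfFinset] at he
      simpa using (Finset.mem_filter.1 he).2
    have hB : (0:ℝ) ≤ K / (n:ℝ) := by positivity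
    have hb := Core.abstract_variance_bound (μ := (edgeStepPMF G hconn hn).toMeasure)
      hmeas' hiid' hdist' ξ0 (edgeUpdate α) Avg
      {e : EdgeStep n | G.Adj e.1 e.2} hGood
      (fun x => ∀ w, x w ∈ Set.Icc lo hi) hx0
      (fun x s hx _ => edge_inv_step hα x hx s)
      (K / (n:ℝ)) hB
      (fun x _ => edge_mart G hconn hn α x)
      (fun x s hx _ => by
        rw [hKlohi]
        exact edge_bound hα (by omega) x hx s)
      t
    have hfun : (fun ω => Avg (edgeTraj α ξ0 (fun s => steps' s ω) t))
        = fun ω => Avg (VarAux.absTraj ξ0 (edgeUpdate α) (fun i => steps' i ω) t) := by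
      funext ω
      rw [edgeTraj_eq_absTraj]
    rw [hfun]
    refine le_trans hb (le_of_eq ?_)
    have hnR : ((n:ℝ)) ≠ 0 := by positivity
    field_simp
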